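/- Let V be a complete discrete valuation ring with perfect residue field k of characteristic p and uniformizer π, and for n ≥ 1 set R_n = V/π^{n+1}. If G and G' are p-divisible groups over V such that G ⊗ R_n ≅ G' ⊗ R_n compatibly for all n (an isomorphism of the inverse systems), then G ≅ G' over V. More generally, the category of p-divisible groups over V is equivalent to the category of compatible systems of p-divisible groups over (R_n)_{n≥1}. -/

import Mathlib

open Pointwise

lemma mem_smul_top_iff'' {V M : Type} [CommRing V] [AddCommGroup M] [Module V M] (c : V) (x : M) :
    x ∈ (c • ⊤ : Submodule V M) ↔ ∃ y, c • y = x := by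
  constructor
  · intro h
    have : x ∈ (↑(c • (⊤ : Submodule V M)) : Set M) := h
    rw [Submodule.coe_pointwise_smul] at this
    obtain ⟨y, -, hy⟩ := this
    exact ⟨y, hy⟩
  · rintro ⟨y, rfl⟩
    exact Submodule.smul_mem_pointwise_smul y c ⊤ trivial

/-- The ideal `span {algebraMap c}` of a `V`-algebra `S`, as a set, is `c • ⊤`. -/
lemma span_algebraMap_eq {V S : Type} [CommRing V] [CommRing S] [Algebra V S] (c : V) (x : S) :
    x ∈ Ideal.span {algebraMap V S c} ↔ x ∈ (c • ⊤ : Submodule V S) := by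
  rw [Ideal.mem_span_singleton, mem_smul_top_iff'']
  constructor
  · rintro ⟨y, rfl⟩
    exact ⟨y, by rw [Algebra.smul_def, mul_comm]⟩
  · rintro ⟨y, rfl⟩
    exact ⟨y, by rw [Algebra.smul_def, mul_comm]⟩

/-- Hausdorff property: an element of a finite module over a complete DVR lying in
`π^{m+1} • ⊤` for all `m` is zero. -/
lemma haus_aux {V : Type} [CommRing V] [IsDomain V] [IsDiscreteValuationRing V]
    {π : V} (hπ : Irreducible π)
    {M : Type} [AddCommGroup M] [Module V M] [Module.Finite V M]
    {x : M} (hx : ∀ m : ℕ, x ∈ ((π ^ (m + 1)) • ⊤ : Submodule V M)) : x = 0 := by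
  have hmax : IsLocalRing.maximalIdeal V = Ideal.span {π} :=
    (IsDiscreteValuationRing.irreducible_iff_uniformizer π).mp hπ
  have hbot := Ideal.iInf_pow_smul_eq_bot_of_isLocalRing (R := V) (M := M)
      (I := IsLocalRing.maximalIdeal V) (IsLocalRing.maximalIdeal.isMaximal V).ne_top
  rw [← Submodule.mem_bot (R := V), ← hbot, Submodule.mem_iInf]
  intro i
  rcases i with _ | m
  · simp
  · have : (IsLocalRing.maximalIdeal V) ^ (m + 1) • (⊤ : Submodule V M)
        = (π ^ (m + 1)) • ⊤ := by
      rw [hmax, Ideal.span_singleton_pow, Submodule.ideal_span_singleton_smul]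
    rw [this]
    exact hx m

/-- Completeness: a Cauchy sequence (w.r.t. the `π`-adic filtration) in a finite projective
module over a complete DVR has a limit. -/
lemma prec_aux {V : Type} [CommRing V] [IsDomain V] [IsDiscreteValuationRing V]
    [IsAdicComplete (IsLocalRing.maximalIdeal V) V]
    {π : V} (hπ : Irreducible π)
    {M : Type} [AddCommGroup M] [Module V M] [Module.Finite V M] [Module.Projective V M]
    (a : ℕ → M) (ha : ∀ m : ℕ, a (m + 1) - a m ∈ ((π ^ (m + 1)) • ⊤ : Submodule V M)) :
    ∃ L : M, ∀ m : ℕ, L - a m ∈ ((π ^ m) • ⊤ : Submodule V M) := by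
  classical
  have hmax : IsLocalRing.maximalIdeal V = Ideal.span {π} :=
    (IsDiscreteValuationRing.irreducible_iff_uniformizer π).mp hπ
  haveI : Module.FinitePresentation V M := Module.finitePresentation_of_projective V M
  haveI : Module.Free V M := Module.free_of_flat_of_isLocalRing
  let ι := Module.Free.ChooseBasisIndex V M
  let b : Module.Basis ι V M := Module.Free.chooseBasis V M
  let I : Ideal V := IsLocalRing.maximalIdeal V
  have hIpow : ∀ k : ℕ, (I ^ k : Ideal V) = Ideal.span {π ^ k} := fun k => by
    show (IsLocalRing.maximalIdeal V) ^ k = _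
    rw [hmax, Ideal.span_singleton_pow]
  let c : ℕ → ι → V := fun m i => b.repr (a m) i
  have hcd : ∀ m i, c (m + 1) i - c m i ∈ (I ^ (m + 1) : Ideal V) := by
    intro m i
    obtain ⟨y, hy⟩ := (mem_smul_top_iff'' _ _).mp (ha m)
    rw [hIpow, Ideal.mem_span_singleton]
    refine ⟨b.repr y i, ?_⟩
    have h1 : c (m + 1) i - c m i = b.repr (a (m + 1) - a m) i := by
      simp only [c, map_sub, Finsupp.sub_apply]
    rw [h1, ← hy, map_smul]
    simp [smul_eq_mul]
  have hcauchy : ∀ i, ∀ {m n : ℕ}, m ≤ n → c m i ≡ c n i [SMOD (I ^ m • ⊤ : Ideal V)] := by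
    intro i m n hmn
    induction n with
    | zero => cases Nat.le_zero.mp hmn; rfl
    | succ n ih =>
      rcases Nat.lt_or_ge m (n + 1) with h | h
      · have hmn' : m ≤ n := Nat.lt_succ_iff.mp h
        refine (ih hmn').trans ?_
        rw [SModEq.sub_mem]
        have h2 : c n i - c (n + 1) i ∈ (I ^ (n + 1) : Ideal V) := by
          simpa using (I ^ (n + 1)).neg_mem (hcd n i)
        have hle : (I ^ (n + 1) : Ideal V) ≤ I ^ m := Ideal.pow_le_pow_right (by omega)
        simpa only [smul_eq_mul, Ideal.mul_top] using hle h2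
      · have hmeq : m = n + 1 := le_antisymm hmn h
        subst hmeq; rfl
  have hprec : IsPrecomplete I V := IsAdicComplete.toIsPrecomplete
  obtain ⟨Lfun, hLfun⟩ : ∃ Lfun : ι → V, ∀ i m, c m i ≡ Lfun i [SMOD (I ^ m • ⊤ : Ideal V)] := by
    choose Lf hLf using fun i => hprec.prec (f := fun m => c m i) (fun {m n} hmn => hcauchy i hmn)
    exact ⟨Lf, fun i m => hLf i m⟩
  refine ⟨∑ i, Lfun i • b i, ?_⟩
  intro m
  have hrepr : ∀ i, ∃ d : V, b.repr (∑ j, Lfun j • b j - a m) i = π ^ m * d := by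
    intro i
    have h1 : b.repr (∑ j, Lfun j • b j) i = Lfun i := by
      simp [map_sum, Finsupp.single_apply, Module.Basis.repr_self]
    have h2 := (hLfun i m)
    rw [SModEq.sub_mem] at h2
    simp only [smul_eq_mul, Ideal.mul_top] at h2
    have h3 : Lfun i - c m i ∈ (I ^ m : Ideal V) := by simpa using (I ^ m).neg_mem h2
    rw [hIpow, Ideal.mem_span_singleton] at h3
    obtain ⟨d, hd⟩ := h3
    refine ⟨d, ?_⟩
    rw [map_sub, Finsupp.sub_apply, h1, ← hd]
  choose d hd using hrepr
  rw [mem_smul_top_iff'']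
  refine ⟨∑ i, d i • b i, ?_⟩
  have := (b.sum_repr (∑ j, Lfun j • b j - a m)).symm
  rw [this]
  rw [Finset.smul_sum]
  refine Finset.sum_congr rfl fun i _ => ?_
  rw [hd i, mul_smul]

open TensorProduct LinearMap in
/-- Kernel bound for a tensor product of two surjective maps whose kernels lie in `c • ⊤`. -/
lemma tensor_ker_le {V M N P Q : Type} [CommRing V]
    [AddCommGroup M] [Module V M] [AddCommGroup N] [Module V N]
    [AddCommGroup P] [Module V P] [AddCommGroup Q] [Module V Q]
    (g : M →ₗ[V] P) (g' : N →ₗ[V] Q)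
    (hg : Function.Surjective g) (hg' : Function.Surjective g') (c : V)
    (hkg : LinearMap.ker g ≤ (c • ⊤ : Submodule V M))
    (hkg' : LinearMap.ker g' ≤ (c • ⊤ : Submodule V N)) :
    LinearMap.ker (TensorProduct.map g g') ≤ (c • ⊤ : Submodule V (M ⊗[V] N)) := by
  rw [TensorProduct.map_ker (hfg := g.exact_subtype_ker_map) (hg := hg)
    (hfg' := g'.exact_subtype_ker_map) (hg' := hg')]
  apply sup_le
  · rintro x ⟨z, rfl⟩
    induction z using TensorProduct.induction_on with
    | zero => simp
    | tmul mm k =>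
      obtain ⟨y, hy⟩ := (mem_smul_top_iff'' _ _).mp (hkg' k.2)
      have : (lTensor M (LinearMap.ker g').subtype) (mm ⊗ₜ[V] k) = mm ⊗ₜ[V] (k : N) := rfl
      rw [this, ← hy, TensorProduct.tmul_smul]
      exact Submodule.smul_mem_pointwise_smul _ c ⊤ trivial
    | add z₁ z₂ h₁ h₂ =>
      rw [map_add]
      exact Submodule.add_mem _ h₁ h₂
  · rintro x ⟨z, rfl⟩
    induction z using TensorProduct.induction_on with
    | zero => simp
    | tmul k nn =>
      obtain ⟨y, hy⟩ := (mem_smul_top_iff'' _ _).mp (hkg k.2)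
      have : (rTensor N (LinearMap.ker g).subtype) (k ⊗ₜ[V] nn) = (k : M) ⊗ₜ[V] nn := rfl
      rw [this, ← hy, ← TensorProduct.smul_tmul']
      exact Submodule.smul_mem_pointwise_smul _ c ⊤ trivial
    | add z₁ z₂ h₁ h₂ =>
      rw [map_add]
      exact Submodule.add_mem _ h₁ h₂

/-- The key lifting lemma: a compatible sequence of elements in the reductions of a finite
projective module over a complete DVR lifts uniquely. -/
lemma exists_unique_lift {V : Type} [CommRing V] [IsDomain V] [IsDiscreteValuationRing V]
    [IsAdicComplete (IsLocalRing.maximalIdeal V) V]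
    {π : V} (hπ : Irreducible π)
    {T : Type} [AddCommGroup T] [Module V T] [Module.Finite V T] [Module.Projective V T]
    {W : ℕ → Type} [∀ m, AddCommGroup (W m)] [∀ m, Module V (W m)]
    (ρ : ∀ m, T →ₗ[V] W m) (hρ : ∀ m, Function.Surjective (ρ m))
    (hk : ∀ m, LinearMap.ker (ρ m) = ((π ^ (m + 1)) • ⊤ : Submodule V T))
    (b : ∀ m, W m) (hcomp : ∀ m (z : T), ρ (m + 1) z = b (m + 1) → ρ m z = b m) :
    ∃! L : T, ∀ m, ρ m L = b m := by
  classical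
  have haa : ∀ m, ρ m ((hρ m (b m)).choose) = b m := fun m => (hρ m (b m)).choose_spec
  set a : ℕ → T := fun m => (hρ m (b m)).choose with ha
  have hstep : ∀ m, a (m + 1) - a m ∈ ((π ^ (m + 1)) • ⊤ : Submodule V T) := by
    intro m
    rw [← hk m, LinearMap.mem_ker, map_sub, hcomp m (a (m + 1)) (haa (m + 1)), haa m, sub_self]
  obtain ⟨L, hL⟩ := prec_aux hπ a hstep
  have key : ∀ m, ρ m L = b m := by
    intro m
    have h1 : L - a (m + 1) ∈ LinearMap.ker (ρ m) := by rw [hk m]; exact hL (m + 1)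
    have h2 : ρ m L = ρ m (a (m + 1)) := by
      have h3 := LinearMap.mem_ker.mp h1
      rw [map_sub, sub_eq_zero] at h3
      exact h3
    rw [h2, hcomp m (a (m + 1)) (haa (m + 1))]
  refine ⟨L, key, ?_⟩
  intro L' hL'
  have : L' - L = 0 := by
    apply haus_aux hπ
    intro m
    rw [← hk m, LinearMap.mem_ker, map_sub, hL' m, key m, sub_self]
  exact sub_eq_zero.mp this


/-- Let `V` be a complete discrete valuation ring with perfect residue
field of characteristic `p` and uniformizer `π`, and set `Rₘ = V/π^{m+1}`.  p-divisible
groups over `V` are, contravariantly, towers `(A n)` of finite locally free commutative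
`V`-Hopf algebras with surjective transition maps (of `p`-power ranks `p^{n·h}`).  The
reduction `G ⊗ Rₘ` corresponds to the quotient Hopf algebra `A n / π^{m+1}`, encoded
below by a surjective bialgebra map `A n → B m n` with kernel `(π^{m+1})`, onto a
Hopf algebra killed by `π^{m+1}` (i.e. an `Rₘ`-Hopf algebra).  If `G ⊗ Rₘ ≅ G' ⊗ Rₘ`
compatibly for all `m` (an isomorphism of the inverse systems), then `G ≅ G'` over `V`,
by a unique isomorphism inducing the given ones; this expresses the equivalence of the
category of `p`-divisible groups over `V` with that of compatible systems over
`(Rₘ)`. -/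
theorem pdivisible_group_determined_by_reductions
    (p : ℕ) [Fact p.Prime]
    (V : Type) [CommRing V] [IsDomain V] [IsDiscreteValuationRing V]
    [IsAdicComplete (IsLocalRing.maximalIdeal V) V]
    [CharP (IsLocalRing.ResidueField V) p]
    [PerfectRing (IsLocalRing.ResidueField V) p]
    (π : V) (hπ : Irreducible π)
    (h h' : ℕ)
    -- the two p-divisible groups over V, as towers of finite locally free
    -- commutative Hopf algebras with surjective transition maps:
    (A A' : ℕ → Type)
    [∀ n, CommRing (A n)] [∀ n, HopfAlgebra V (A n)]
    [∀ n, Module.Finite V (A n)] [∀ n, Module.Projective V (A n)]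
    [∀ n, CommRing (A' n)] [∀ n, HopfAlgebra V (A' n)]
    [∀ n, Module.Finite V (A' n)] [∀ n, Module.Projective V (A' n)]
    (hA : ∀ n, Module.finrank V (A n) = p ^ (n * h))
    (hA' : ∀ n, Module.finrank V (A' n) = p ^ (n * h'))
    (t : ∀ n, A (n + 1) →ₐc[V] A n) (ht : ∀ n, Function.Surjective (t n))
    (t' : ∀ n, A' (n + 1) →ₐc[V] A' n) (ht' : ∀ n, Function.Surjective (t' n))
    -- the reductions mod π^{m+1} of the two towers:
    (B B' : ℕ → ℕ → Type)
    [∀ m n, CommRing (B m n)] [∀ m n, HopfAlgebra V (B m n)]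
    [∀ m n, CommRing (B' m n)] [∀ m n, HopfAlgebra V (B' m n)]
    (hB : ∀ m n (x : B m n), (π ^ (m + 1)) • x = 0)
    (hB' : ∀ m n (x : B' m n), (π ^ (m + 1)) • x = 0)
    (r : ∀ m n, A n →ₐc[V] B m n) (hr : ∀ m n, Function.Surjective (r m n))
    (hker : ∀ m n, RingHom.ker (r m n : A n →+* B m n)
      = Ideal.span {algebraMap V (A n) (π ^ (m + 1))})
    (r' : ∀ m n, A' n →ₐc[V] B' m n) (hr' : ∀ m n, Function.Surjective (r' m n))
    (hker' : ∀ m n, RingHom.ker (r' m n : A' n →+* B' m n)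
      = Ideal.span {algebraMap V (A' n) (π ^ (m + 1))})
    -- transition maps of the reduced towers, compatible with r and t:
    (u : ∀ m n, B m (n + 1) →ₐc[V] B m n)
    (hu : ∀ m n (x : A (n + 1)), u m n (r m (n + 1) x) = r m n (t n x))
    (u' : ∀ m n, B' m (n + 1) →ₐc[V] B' m n)
    (hu' : ∀ m n (x : A' (n + 1)), u' m n (r' m (n + 1) x) = r' m n (t' n x))
    -- reduction maps mod π^{m+1} of the reductions mod π^{m+2}:
    (v : ∀ m n, B (m + 1) n →ₐc[V] B m n)
    (hv : ∀ m n (x : A n), v m n (r (m + 1) n x) = r m n x)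
    (v' : ∀ m n, B' (m + 1) n →ₐc[V] B' m n)
    (hv' : ∀ m n (x : A' n), v' m n (r' (m + 1) n x) = r' m n x)
    -- the compatible system of isomorphisms G ⊗ Rₘ ≅ G' ⊗ Rₘ:
    (φ : ∀ m n, B m n ≃ₐc[V] B' m n)
    (hφu : ∀ m n (x : B m (n + 1)), φ m n (u m n x) = u' m n (φ m (n + 1) x))
    (hφv : ∀ m n (x : B (m + 1) n), φ m n (v m n x) = v' m n (φ (m + 1) n x)) :
    -- then G ≅ G' over V, by a unique isomorphism of towers inducing the φ's:
    ∃ Φ : ∀ n, A n ≃ₐc[V] A' n,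
      (∀ n (x : A (n + 1)), Φ n (t n x) = t' n (Φ (n + 1) x)) ∧
      (∀ m n (x : A n), r' m n (Φ n x) = φ m n (r m n x)) ∧
      (∀ Ψ : ∀ n, A n ≃ₐc[V] A' n,
        (∀ n (x : A (n + 1)), Ψ n (t n x) = t' n (Ψ (n + 1) x)) →
        (∀ m n (x : A n), r' m n (Ψ n x) = φ m n (r m n x)) →
        ∀ n (x : A n), Ψ n x = Φ n x) := by
  classical
  -- the kernels of the reduction maps, as linear maps
  have hkerlin : ∀ m n, LinearMap.ker ((r m n : A n →ₗ[V] B m n))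
      = ((π ^ (m + 1)) • ⊤ : Submodule V (A n)) := by
    intro m n
    ext x
    rw [LinearMap.mem_ker]
    constructor
    · intro hx
      have hx' : x ∈ RingHom.ker (r m n : A n →+* B m n) := by
        rw [RingHom.mem_ker]; exact hx
      rw [hker m n] at hx'
      exact (span_algebraMap_eq _ _).mp hx'
    · intro hx
      have hx' : x ∈ Ideal.span {algebraMap V (A n) (π ^ (m + 1))} :=
        (span_algebraMap_eq _ _).mpr hx
      rw [← hker m n, RingHom.mem_ker] at hx'
      exact hx'
  have hkerlin' : ∀ m n, LinearMap.ker ((r' m n : A' n →ₗ[V] B' m n))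
      = ((π ^ (m + 1)) • ⊤ : Submodule V (A' n)) := by
    intro m n
    ext x
    rw [LinearMap.mem_ker]
    constructor
    · intro hx
      have hx' : x ∈ RingHom.ker (r' m n : A' n →+* B' m n) := by
        rw [RingHom.mem_ker]; exact hx
      rw [hker' m n] at hx'
      exact (span_algebraMap_eq _ _).mp hx'
    · intro hx
      have hx' : x ∈ Ideal.span {algebraMap V (A' n) (π ^ (m + 1))} :=
        (span_algebraMap_eq _ _).mpr hx
      rw [← hker' m n, RingHom.mem_ker] at hx'
      exact hx'
  -- unique lifts in one direction
  have ex : ∀ n (x : A n), ∃! y : A' n, ∀ m, r' m n y = φ m n (r m n x) := by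
    intro n x
    refine exists_unique_lift hπ (ρ := fun m => (r' m n : A' n →ₗ[V] B' m n))
      (fun m => by exact hr' m n) (fun m => hkerlin' m n)
      (fun m => φ m n (r m n x)) ?_
    intro m z hz
    show r' m n z = _
    have h1 := hv' m n z
    rw [← h1]
    have hz' : r' (m + 1) n z = φ (m + 1) n (r (m + 1) n x) := hz
    rw [hz', ← hφv m n, hv m n x]
  -- unique lifts in the other direction
  have ex' : ∀ n (y : A' n), ∃! x : A n, ∀ m, r m n x = (φ m n).symm (r' m n y) := by
    intro n y
    refine exists_unique_lift hπ (ρ := fun m => (r m n : A n →ₗ[V] B m n))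
      (fun m => by exact hr m n) (fun m => hkerlin m n)
      (fun m => (φ m n).symm (r' m n y)) ?_
    intro m z hz
    show r m n z = _
    have h1 := hv m n z
    rw [← h1]
    have hz' : r (m + 1) n z = (φ (m + 1) n).symm (r' (m + 1) n y) := hz
    rw [hz']
    have h2 := hφv m n ((φ (m + 1) n).symm (r' (m + 1) n y))
    rw [show (φ (m + 1) n) ((φ (m + 1) n).symm (r' (m + 1) n y)) = r' (m + 1) n y from
      EquivLike.right_inv _ _] at h2
    rw [hv' m n y] at h2
    have hinj : Function.Injective (φ m n) := EquivLike.injective _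
    apply hinj
    rw [h2]
    exact (EquivLike.right_inv _ _).symm
  -- the two maps
  let F : ∀ n, A n → A' n := fun n x => (ex n x).choose
  have hF : ∀ n (x : A n) (m : ℕ), r' m n (F n x) = φ m n (r m n x) :=
    fun n x => (ex n x).choose_spec.1
  have hFuniq : ∀ n (x : A n) (y : A' n), (∀ m, r' m n y = φ m n (r m n x)) → y = F n x :=
    fun n x y hy => (ex n x).choose_spec.2 y hy
  let G : ∀ n, A' n → A n := fun n y => (ex' n y).choose
  have hG : ∀ n (y : A' n) (m : ℕ), r m n (G n y) = (φ m n).symm (r' m n y) :=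
    fun n y => (ex' n y).choose_spec.1
  -- inverse properties
  have hGF : ∀ n (x : A n), G n (F n x) = x := by
    intro n x
    refine ((ex' n (F n x)).choose_spec.2 x ?_).symm
    intro m
    rw [hF n x m]
    exact (EquivLike.left_inv (φ m n) _).symm
  have hFG : ∀ n (y : A' n), F n (G n y) = y := by
    intro n y
    refine ((ex n (G n y)).choose_spec.2 y ?_).symm
    intro m
    rw [hG n y m]
    exact (EquivLike.right_inv (φ m n) _).symm
  -- algebraic properties of F
  have hFadd : ∀ n (x y : A n), F n (x + y) = F n x + F n y := by
    intro n x y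
    refine (hFuniq n (x + y) (F n x + F n y) ?_).symm
    intro m
    rw [map_add, map_add, map_add, hF n x m, hF n y m]
  have hFsmul : ∀ n (c : V) (x : A n), F n (c • x) = c • F n x := by
    intro n c x
    refine (hFuniq n (c • x) (c • F n x) ?_).symm
    intro m
    rw [map_smul, map_smul, map_smul, hF n x m]
  have hFmul : ∀ n (x y : A n), F n (x * y) = F n x * F n y := by
    intro n x y
    refine (hFuniq n (x * y) (F n x * F n y) ?_).symm
    intro m
    rw [map_mul, map_mul, map_mul, hF n x m, hF n y m]
  -- F as a linear map
  let Fl : ∀ n, A n →ₗ[V] A' n := fun n =>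
    { toFun := F n
      map_add' := hFadd n
      map_smul' := fun c x => by simpa using hFsmul n c x }
  have hFl : ∀ n (x : A n), Fl n x = F n x := fun n x => rfl
  -- counit compatibility
  have hcounit : ∀ n, (Coalgebra.counit : A' n →ₗ[V] V) ∘ₗ Fl n
      = (Coalgebra.counit : A n →ₗ[V] V) := by
    intro n
    apply LinearMap.ext
    intro x
    simp only [LinearMap.comp_apply]
    show Coalgebra.counit (F n x) = Coalgebra.counit x
    have h1 : Coalgebra.counit (R := V) (F n x)
        = Coalgebra.counit (r' 0 n (F n x)) :=
      (CoalgHomClass.counit_comp_apply (r' 0 n) (F n x)).symm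
    rw [h1, hF n x 0, CoalgHomClass.counit_comp_apply (φ 0 n) (r 0 n x),
      CoalgHomClass.counit_comp_apply (r 0 n) x]
  -- comultiplication compatibility
  have hcomul : ∀ n, TensorProduct.map (Fl n) (Fl n) ∘ₗ Coalgebra.comul
      = Coalgebra.comul ∘ₗ Fl n := by
    intro n
    apply LinearMap.ext
    intro x
    simp only [LinearMap.comp_apply]
    have hmain : ∀ m : ℕ, TensorProduct.map (Fl n) (Fl n) (Coalgebra.comul x)
        - Coalgebra.comul (Fl n x)
        ∈ ((π ^ (m + 1)) • ⊤ : Submodule V (TensorProduct V (A' n) (A' n))) := by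
      intro m
      have hker_le : LinearMap.ker (TensorProduct.map
            (r' m n : A' n →ₗ[V] B' m n) (r' m n : A' n →ₗ[V] B' m n))
          ≤ ((π ^ (m + 1)) • ⊤ : Submodule V (TensorProduct V (A' n) (A' n))) :=
        tensor_ker_le _ _ (by exact hr' m n) (by exact hr' m n) _
          (le_of_eq (hkerlin' m n)) (le_of_eq (hkerlin' m n))
      apply hker_le
      rw [LinearMap.mem_ker, map_sub, sub_eq_zero]
      have hA1 : TensorProduct.map (r' m n : A' n →ₗ[V] B' m n)
            (r' m n : A' n →ₗ[V] B' m n) (Coalgebra.comul (Fl n x))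
          = Coalgebra.comul (r' m n (Fl n x)) :=
        CoalgHomClass.map_comp_comul_apply (r' m n) (Fl n x)
      have hB1 : ∀ z : TensorProduct V (A n) (A n),
          TensorProduct.map (r' m n : A' n →ₗ[V] B' m n) (r' m n : A' n →ₗ[V] B' m n)
            (TensorProduct.map (Fl n) (Fl n) z)
          = TensorProduct.map ((φ m n).toBialgHom : B m n →ₗ[V] B' m n)
              ((φ m n).toBialgHom : B m n →ₗ[V] B' m n)
            (TensorProduct.map (r m n : A n →ₗ[V] B m n) (r m n : A n →ₗ[V] B m n) z) := by
        intro z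
        induction z using TensorProduct.induction_on with
        | zero => simp
        | tmul a b =>
          simp only [TensorProduct.map_tmul]
          rw [show ((r' m n : A' n →ₗ[V] B' m n)) (Fl n a) = φ m n (r m n a) from hF n a m,
            show ((r' m n : A' n →ₗ[V] B' m n)) (Fl n b) = φ m n (r m n b) from hF n b m]
          rfl
        | add z₁ z₂ h₁ h₂ =>
          rw [map_add, map_add, map_add, map_add, h₁, h₂]
      rw [hA1, hB1]
      have hC1 : TensorProduct.map (r m n : A n →ₗ[V] B m n) (r m n : A n →ₗ[V] B m n)
            (Coalgebra.comul x) = Coalgebra.comul (r m n x) :=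
        CoalgHomClass.map_comp_comul_apply (r m n) x
      rw [hC1]
      have hD1 : TensorProduct.map ((φ m n).toBialgHom : B m n →ₗ[V] B' m n)
            ((φ m n).toBialgHom : B m n →ₗ[V] B' m n) (Coalgebra.comul (r m n x))
          = Coalgebra.comul ((φ m n).toBialgHom (r m n x)) :=
        CoalgHomClass.map_comp_comul_apply ((φ m n).toBialgHom) (r m n x)
      rw [hD1, show r' m n (Fl n x) = φ m n (r m n x) from hF n x m]
      rfl
    have h0 := haus_aux hπ (M := TensorProduct V (A' n) (A' n)) hmain
    exact sub_eq_zero.mp h0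
  -- assemble the bialgebra equivalences
  let Φ : ∀ n, A n ≃ₐc[V] A' n := fun n =>
    { toLinearMap := Fl n
      counit_comp := hcounit n
      map_comp_comul := hcomul n
      invFun := G n
      left_inv := hGF n
      right_inv := hFG n
      map_mul' := hFmul n }
  have happ : ∀ n (x : A n), Φ n x = F n x := fun n x => rfl
  refine ⟨Φ, ?_, ?_, ?_⟩
  · intro n x
    have h1 : t' n (F (n + 1) x) = F n (t n x) := by
      apply hFuniq
      intro m
      rw [← hu' m n (F (n + 1) x), hF (n + 1) x m, ← hφu m n (r m (n + 1) x), hu m n x]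
    show F n (t n x) = t' n (F (n + 1) x)
    exact h1.symm
  · intro m n x
    exact hF n x m
  · intro Ψ hΨt hΨr n x
    exact hFuniq n x (Ψ n x) (fun m => hΨr m n x)
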